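/- Let n ≥ 2 be a fixed integer and let K, y, q be positive integers with q ≥ 2 and y ≥ 2, and let α be a real number with |α − a/q| ≤ 1/q², gcd(a, q) = 1. Set W₄ = Σ_{h ≤ (n−1)! K y^{n−1}} τ_n(h) · min( y, 1/(2‖α h‖) ), where the sum runs over positive integers h. Then there exists a constant C depending only on n such that W₄² ≤ C · K² y^{2n} · ( 1/q + 1/(K y^{n−1}) + 1/y + q/(K yⁿ) ) · (ln(K y^{n}))^{n²}. -/

import Mathlib

open Finset

/-- `‖t‖`, the distance from the real number `t` to the nearest integer. -/
noncomputable def distNearestInt (t : ℝ) : ℝ := |t - (round t : ℤ)|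

/-- `min(A, 1/(2‖t‖))`, interpreted as `A` when `‖t‖ = 0`. -/
noncomputable def minInv2 (A t : ℝ) : ℝ :=
  if distNearestInt t = 0 then A else min A (1 / (2 * distNearestInt t))

/-- The `n`-fold divisor function `τ_n(h)`: the number of ordered `n`-tuples
`(d₁, …, d_n)` of positive integers with `d₁ d₂ ⋯ d_n = h`. -/
def tau (n h : ℕ) : ℕ :=
  ((Fintype.piFinset fun _ : Fin n => Finset.Icc 1 h).filter fun d => ∏ i, d i = h).card

set_option maxHeartbeats 2000000

lemma log_telescope (c : ℝ) (hc : 0 < c) (m : ℕ) :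
    ∑ s ∈ range m, 1 / (c + s + 1) ≤ Real.log (c + m) - Real.log c := by
  induction m with
  | zero => simp
  | succ m ih =>
    rw [Finset.sum_range_succ, show ((m+1:ℕ):ℝ) = (m:ℝ)+1 by push_cast; ring]
    rw [show c + ((m:ℝ)+1) = c + (m:ℝ) + 1 by ring]
    have h1 : (0:ℝ) < c + m := by positivity
    have h2 : (0:ℝ) < c + m + 1 := by positivity
    have key : 1 / (c + (m:ℝ) + 1) ≤ Real.log (c + (m:ℝ) + 1) - Real.log (c + (m:ℝ)) := by
      have h3 := Real.log_le_sub_one_of_pos (x := (c+m)/(c+m+1)) (by positivity)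
      rw [Real.log_div h1.ne' h2.ne'] at h3
      have h4 : (c+(m:ℝ))/(c+m+1) - 1 = -(1/(c+m+1)) := by field_simp; ring
      linarith [h3, h4.le]
    linarith [ih]

lemma harmonic_le (X : ℕ) (hX : 1 ≤ X) : ∑ d ∈ Icc 1 X, (1:ℝ)/d ≤ 1 + Real.log X := by
  have h0 : Icc 1 X = Ico 1 (X+1) := by rw [Finset.Ico_add_one_right_eq_Icc]
  rw [h0, Finset.sum_Ico_eq_sum_range]
  have h1 : X + 1 - 1 = (X - 1) + 1 := by omega
  rw [h1, Finset.sum_range_succ']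
  have h2 : ∑ i ∈ range (X-1), (1:ℝ)/(1 + (i+1) : ℕ) ≤ Real.log X := by
    have h3 := log_telescope 1 one_pos (X-1)
    simp only [Real.log_one, sub_zero] at h3
    have h4 : ((1:ℝ) + (X-1:ℕ)) = X := by
      have : (X - 1 : ℕ) = ((X:ℝ) - 1) := by push_cast [hX]; ring
      rw [this]; ring
    rw [h4] at h3
    refine le_trans (le_of_eq ?_) h3
    apply Finset.sum_congr rfl
    intro i _
    push_cast
    ring
  have h5 : ((1:ℝ)/(1 + 0 : ℕ)) = 1 := by norm_num
  rw [h5]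
  linarith

/-- tuples of positives with product at most `X` -/
def Dtup (k X : ℕ) : Finset (Fin k → ℕ) :=
  (Fintype.piFinset fun _ : Fin k => Finset.Icc 1 X).filter fun d => ∏ i, d i ≤ X

lemma fiber_eq (k X h : ℕ) (hh : h ∈ Icc 1 X) :
    (Dtup k X).filter (fun d => ∏ i, d i = h)
      = (Fintype.piFinset fun _ : Fin k => Finset.Icc 1 h).filter fun d => ∏ i, d i = h := by
  rw [mem_Icc] at hh
  ext d
  simp only [Dtup, mem_filter, Fintype.mem_piFinset, mem_Icc, filter_filter]
  constructor
  · rintro ⟨hd, -, hp⟩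
    refine ⟨fun i => ⟨(hd i).1, ?_⟩, hp⟩
    have : d i ∣ ∏ j, d j := Finset.dvd_prod_of_mem d (mem_univ i)
    rw [hp] at this
    exact Nat.le_of_dvd (by omega) this
  · rintro ⟨hd, hp⟩
    exact ⟨fun i => ⟨(hd i).1, le_trans (hd i).2 hh.2⟩, by omega, hp⟩

lemma sum_tau_eq (k X : ℕ) : ∑ h ∈ Icc 1 X, tau k h = (Dtup k X).card := by
  rw [Finset.card_eq_sum_card_fiberwise (f := fun d => ∏ i, d i) (t := Icc 1 X)]
  · apply Finset.sum_congr rfl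
    intro h hh
    rw [fiber_eq k X h hh]
    rfl
  · intro d hd
    simp only [Dtup, mem_coe, mem_filter, Fintype.mem_piFinset, mem_Icc] at hd
    simp only [mem_coe, mem_Icc]
    refine ⟨Finset.one_le_prod' (fun i _ => (hd.1 i).1), hd.2⟩

lemma Dtup_succ_le (k X : ℕ) :
    (Dtup (k+1) X).card ≤ ∑ d ∈ Icc 1 X, (Dtup k (X / d)).card := by
  rw [Finset.card_eq_sum_card_fiberwise (f := fun t => t 0) (t := Icc 1 X)
    (fun t ht => by
      simp only [Dtup, mem_coe, mem_filter, Fintype.mem_piFinset] at ht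
      exact ht.1 0)]
  apply Finset.sum_le_sum
  intro d₀ hd₀
  rw [mem_Icc] at hd₀
  apply Finset.card_le_card_of_injOn (fun t => Fin.tail t)
  · intro t ht
    simp only [mem_coe, mem_filter, Dtup, Fintype.mem_piFinset, mem_Icc] at ht ⊢
    obtain ⟨⟨hmem, hprod⟩, h0⟩ := ht
    have hsplit : ∏ i, t i = t 0 * ∏ i : Fin k, Fin.tail t i := Fin.prod_univ_succ t
    have htail : ∏ i : Fin k, Fin.tail t i ≤ X / d₀ := by
      rw [Nat.le_div_iff_mul_le (by omega)]
      rw [h0] at hsplit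
      calc (∏ i : Fin k, Fin.tail t i) * d₀ = d₀ * ∏ i : Fin k, Fin.tail t i := by ring
        _ = ∏ i, t i := hsplit.symm
        _ ≤ X := hprod
    refine ⟨fun i => ⟨(hmem i.succ).1, ?_⟩, htail⟩
    have hdvd : Fin.tail t i ∣ ∏ j : Fin k, Fin.tail t j :=
      Finset.dvd_prod_of_mem _ (mem_univ i)
    have hpos : 1 ≤ ∏ j : Fin k, Fin.tail t j :=
      Finset.one_le_prod' (fun j _ => (hmem j.succ).1)
    exact le_trans (Nat.le_of_dvd (by omega) hdvd) htail
  · intro t ht t' ht' htt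
    simp only [Finset.coe_filter, Set.mem_setOf_eq] at ht ht'
    simp only at htt
    rw [← Fin.cons_self_tail t, ← Fin.cons_self_tail t', htt, ht.2, ht'.2]

lemma Dtup_card_le (k : ℕ) : ∀ X : ℕ, 1 ≤ X →
    ((Dtup (k+1) X).card : ℝ) ≤ X * (1 + Real.log X)^k := by
  induction k with
  | zero =>
    intro X hX
    have h1 : (Dtup 1 X).card ≤ (Fintype.piFinset fun _ : Fin 1 => Finset.Icc 1 X).card :=
      Finset.card_filter_le _ _
    have h2 : (Fintype.piFinset fun _ : Fin 1 => Finset.Icc 1 X).card = X := by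
      rw [Fintype.card_piFinset]
      simp [Nat.card_Icc]
    rw [h2] at h1
    rw [pow_zero, mul_one]
    exact_mod_cast h1
  | succ k ih =>
    intro X hX
    have hlogX : 0 ≤ Real.log X := Real.log_natCast_nonneg X
    calc ((Dtup (k+2) X).card : ℝ)
        ≤ ∑ d ∈ Icc 1 X, ((Dtup (k+1) (X / d)).card : ℝ) := by
          exact_mod_cast Dtup_succ_le (k+1) X
      _ ≤ ∑ d ∈ Icc 1 X, ((X:ℝ)/d) * (1 + Real.log X)^k := by
          apply Finset.sum_le_sum
          intro d hd
          rw [mem_Icc] at hd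
          have hXd : 1 ≤ X / d := (Nat.one_le_div_iff (by omega)).2 hd.2
          calc ((Dtup (k+1) (X / d)).card : ℝ)
              ≤ (X/d : ℕ) * (1 + Real.log (X/d : ℕ))^k := ih _ hXd
            _ ≤ ((X:ℝ)/d) * (1 + Real.log X)^k := by
                apply mul_le_mul
                · exact Nat.cast_div_le
                · apply pow_le_pow_left₀
                  · have : (1:ℝ) ≤ (X/d : ℕ) := by exact_mod_cast hXd
                    have := Real.log_natCast_nonneg (X/d)
                    linarith
                  · have hle : (X/d : ℕ) ≤ X := Nat.div_le_self X d
                    have := Real.log_le_log (by positivity)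
                      (show ((X/d : ℕ):ℝ) ≤ X by exact_mod_cast hle)
                    linarith
                · positivity
                · positivity
      _ = X * (1 + Real.log X)^k * ∑ d ∈ Icc 1 X, (1:ℝ)/d := by
          rw [Finset.mul_sum]
          apply Finset.sum_congr rfl
          intro d _
          ring
      _ ≤ X * (1 + Real.log X)^k * (1 + Real.log X) := by
          apply mul_le_mul_of_nonneg_left (harmonic_le X hX) (by positivity)
      _ = X * (1 + Real.log X)^(k+1) := by ring

lemma sum_tau_le (k X : ℕ) (hX : 1 ≤ X) :
    (∑ h ∈ Icc 1 X, (tau (k+1) h : ℝ)) ≤ X * (1 + Real.log X)^k := by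
  rw [← Nat.cast_sum, sum_tau_eq]
  exact Dtup_card_le k X hX

/-- cumulative products -/
def cum (d : ℕ → ℕ) (i : ℕ) : ℕ := ∏ t ∈ range i, d t

lemma cum_pos (d : ℕ → ℕ) (hd : ∀ t, 1 ≤ d t) (i : ℕ) : 1 ≤ cum d i :=
  Finset.one_le_prod' fun t _ => hd t

lemma cum_succ (d : ℕ → ℕ) (i : ℕ) : cum d (i+1) = cum d i * d i :=
  Finset.prod_range_succ d i

lemma cum_dvd (d : ℕ → ℕ) {i n : ℕ} (h : i ≤ n) : cum d i ∣ cum d n := by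
  obtain ⟨k, rfl⟩ := Nat.exists_eq_add_of_le h
  rw [cum, cum, Finset.prod_range_add]
  exact dvd_mul_right _ _

lemma gcd_mul_dvd {a A b B : ℕ} (ha : 0 < a) (hb : 0 < b) (hA : 0 < A) (hB : 0 < B)
    (hdA : a ∣ A) (hdB : b ∣ B) :
    Nat.gcd a B * Nat.gcd A b ∣ Nat.gcd A B * Nat.gcd a b := by
  have g1 : 0 < Nat.gcd a B := Nat.gcd_pos_of_pos_left _ ha
  have g2 : 0 < Nat.gcd A b := Nat.gcd_pos_of_pos_left _ hA
  have g3 : 0 < Nat.gcd A B := Nat.gcd_pos_of_pos_left _ hA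
  have g4 : 0 < Nat.gcd a b := Nat.gcd_pos_of_pos_left _ ha
  have h1 : Nat.gcd a B * Nat.gcd A b ≠ 0 := by positivity
  have h2 : Nat.gcd A B * Nat.gcd a b ≠ 0 := by positivity
  rw [← Nat.factorization_le_iff_dvd h1 h2]
  rw [Nat.factorization_mul g1.ne' g2.ne',
      Nat.factorization_mul g3.ne' g4.ne',
      Nat.factorization_gcd ha.ne' hB.ne', Nat.factorization_gcd hA.ne' hb.ne',
      Nat.factorization_gcd hA.ne' hB.ne', Nat.factorization_gcd ha.ne' hb.ne']
  rw [Finsupp.le_def]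
  intro p
  simp only [Finsupp.add_apply, Finsupp.inf_apply]
  have hvA : a.factorization p ≤ A.factorization p :=
    (Nat.factorization_le_iff_dvd ha.ne' hA.ne').2 hdA p
  have hvB : b.factorization p ≤ B.factorization p :=
    (Nat.factorization_le_iff_dvd hb.ne' hB.ne').2 hdB p
  omega

/-- the gcd interpolation matrix -/
def gmat (d e : ℕ → ℕ) (i j : ℕ) : ℕ :=
  (Nat.gcd (cum d (i+1)) (cum e (j+1)) * Nat.gcd (cum d i) (cum e j)) /
    (Nat.gcd (cum d i) (cum e (j+1)) * Nat.gcd (cum d (i+1)) (cum e j))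

section gmat
variable {d e : ℕ → ℕ} (hd : ∀ t, 1 ≤ d t) (he : ∀ t, 1 ≤ e t)
include hd he

lemma gmat_den_dvd (i j : ℕ) :
    Nat.gcd (cum d i) (cum e (j+1)) * Nat.gcd (cum d (i+1)) (cum e j) ∣
      Nat.gcd (cum d (i+1)) (cum e (j+1)) * Nat.gcd (cum d i) (cum e j) :=
  gcd_mul_dvd (cum_pos d hd i) (cum_pos e he j) (cum_pos d hd (i+1)) (cum_pos e he (j+1))
    (by rw [cum_succ]; exact dvd_mul_right _ _) (by rw [cum_succ]; exact dvd_mul_right _ _)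

lemma gmat_mul (i j : ℕ) :
    gmat d e i j * (Nat.gcd (cum d i) (cum e (j+1)) * Nat.gcd (cum d (i+1)) (cum e j)) =
      Nat.gcd (cum d (i+1)) (cum e (j+1)) * Nat.gcd (cum d i) (cum e j) :=
  Nat.div_mul_cancel (gmat_den_dvd hd he i j)

lemma gmat_pos (i j : ℕ) : 1 ≤ gmat d e i j := by
  rcases Nat.eq_zero_or_pos (gmat d e i j) with h0 | h1
  · exfalso
    have := gmat_mul hd he i j
    rw [h0, zero_mul] at this
    have h2 : 0 < Nat.gcd (cum d (i+1)) (cum e (j+1)) * Nat.gcd (cum d i) (cum e j) :=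
      Nat.mul_pos (Nat.gcd_pos_of_pos_left _ (cum_pos d hd (i+1)))
        (Nat.gcd_pos_of_pos_left _ (cum_pos d hd i))
    omega
  · exact h1

lemma gmat_row {n : ℕ} (heq : cum d n = cum e n) {i : ℕ} (hin : i < n) :
    ∏ j ∈ range n, gmat d e i j = d i := by
  set A := cum d i with hA
  set A' := cum d (i+1) with hA'
  set G : ℕ → ℕ := fun x => ∏ j ∈ range n, Nat.gcd x (cum e j) with hG
  set G' : ℕ → ℕ := fun x => ∏ j ∈ range n, Nat.gcd x (cum e (j+1)) with hG'
  have hGpos : ∀ x, 0 < x → 0 < G x := fun x hx =>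
    Finset.prod_pos fun j _ => Nat.gcd_pos_of_pos_left _ hx
  have hApos : 0 < A := cum_pos d hd i
  have hA'pos : 0 < A' := cum_pos d hd (i+1)
  have key : ∀ x : ℕ, 0 < x → x ∣ cum e n → G' x = G x * x := by
    intro x hx hdvd
    have e1 : ∏ j ∈ range (n+1), Nat.gcd x (cum e j) = G x * Nat.gcd x (cum e n) :=
      Finset.prod_range_succ _ n
    have e2 : ∏ j ∈ range (n+1), Nat.gcd x (cum e j) = G' x * Nat.gcd x (cum e 0) :=
      Finset.prod_range_succ' _ n
    have e3 : cum e 0 = 1 := rfl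
    have e4 : Nat.gcd x (cum e n) = x := Nat.gcd_eq_left hdvd
    rw [e3, Nat.gcd_one_right] at e2
    rw [e4] at e1
    omega
  have hdvdA : A ∣ cum e n := heq ▸ cum_dvd d (Nat.le_of_lt hin)
  have hdvdA' : A' ∣ cum e n := heq ▸ cum_dvd d hin
  have h1 : (∏ j ∈ range n, gmat d e i j) *
      (∏ j ∈ range n, Nat.gcd A (cum e (j+1)) * Nat.gcd A' (cum e j)) =
      ∏ j ∈ range n, Nat.gcd A' (cum e (j+1)) * Nat.gcd A (cum e j) := by
    rw [← Finset.prod_mul_distrib]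
    exact Finset.prod_congr rfl fun j _ => gmat_mul hd he i j
  have h2 : (∏ j ∈ range n, Nat.gcd A (cum e (j+1)) * Nat.gcd A' (cum e j)) =
      G' A * G A' := by
    rw [Finset.prod_mul_distrib]
  have h3 : (∏ j ∈ range n, Nat.gcd A' (cum e (j+1)) * Nat.gcd A (cum e j)) =
      G' A' * G A := by
    rw [Finset.prod_mul_distrib]
  rw [h2, h3, key A hApos hdvdA, key A' hA'pos hdvdA'] at h1
  have hstep : A' = A * d i := cum_succ d i
  have hc : 0 < G A * G A' * A :=
    Nat.mul_pos (Nat.mul_pos (hGpos A hApos) (hGpos A' hA'pos)) hApos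
  apply Nat.eq_of_mul_eq_mul_right hc
  calc (∏ j ∈ range n, gmat d e i j) * (G A * G A' * A)
      = (∏ j ∈ range n, gmat d e i j) * (G A * A * G A') := by ring
    _ = G A' * A' * G A := h1
    _ = G A' * (A * d i) * G A := by rw [← hstep]
    _ = d i * (G A * G A' * A) := by ring

end gmat

lemma gmat_comm (d e : ℕ → ℕ) (i j : ℕ) : gmat d e i j = gmat e d j i := by
  rw [gmat, gmat, Nat.gcd_comm (cum e (j+1)) (cum d (i+1)), Nat.gcd_comm (cum e j) (cum d i),
    Nat.gcd_comm (cum e j) (cum d (i+1)), Nat.gcd_comm (cum e (j+1)) (cum d i),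
    mul_comm (Nat.gcd (cum d (i+1)) (cum e j)) (Nat.gcd (cum d i) (cum e (j+1)))]

/-- extension of a finite tuple by 1s -/
def extT {n : ℕ} (d : Fin n → ℕ) : ℕ → ℕ := fun t => if ht : t < n then d ⟨t, ht⟩ else 1

lemma extT_pos {n : ℕ} {d : Fin n → ℕ} (hd : ∀ i, 1 ≤ d i) : ∀ t, 1 ≤ extT d t := by
  intro t
  unfold extT
  split
  · exact hd _
  · exact le_refl 1

lemma extT_apply {n : ℕ} (d : Fin n → ℕ) (i : Fin n) : extT d i = d i := by
  unfold extT
  rw [dif_pos i.isLt]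

lemma cum_extT {n : ℕ} (d : Fin n → ℕ) : cum (extT d) n = ∏ i, d i := by
  rw [cum, ← Fin.prod_univ_eq_prod_range]
  exact Finset.prod_congr rfl fun i _ => extT_apply d i

lemma tau_sq_le (n h : ℕ) (hh : 1 ≤ h) : tau n h ^ 2 ≤ tau (n * n) h := by
  set T := (Fintype.piFinset fun _ : Fin n => Finset.Icc 1 h).filter fun d => ∏ i, d i = h
    with hT
  have h0 : tau n h ^ 2 = (T ×ˢ T).card := by rw [Finset.card_product, sq]; rfl
  have h0' : tau (n*n) h =
      ((Fintype.piFinset fun _ : Fin (n*n) => Finset.Icc 1 h).filter fun d => ∏ i, d i = h).card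
    := rfl
  rw [h0, h0']
  have hTmem : ∀ d ∈ T, (∀ i, 1 ≤ d i ∧ d i ≤ h) ∧ ∏ i, d i = h := by
    intro d hd
    simp only [hT, mem_filter, Fintype.mem_piFinset, mem_Icc] at hd
    exact hd
  apply Finset.card_le_card_of_injOn
    (fun de => fun p : Fin (n*n) =>
      gmat (extT de.1) (extT de.2) ((finProdFinEquiv.symm p).1 : ℕ) ((finProdFinEquiv.symm p).2 : ℕ))
  · rintro ⟨d, e⟩ hde
    rw [Finset.mem_coe, Finset.mem_product] at hde
    obtain ⟨hd, hdp⟩ := hTmem d hde.1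
    obtain ⟨he, hep⟩ := hTmem e hde.2
    have hdpos := extT_pos (n := n) (d := d) fun i => (hd i).1
    have hepos := extT_pos (n := n) (d := e) fun i => (he i).1
    have heq : cum (extT d) n = cum (extT e) n := by rw [cum_extT, cum_extT, hdp, hep]
    have hrow : ∀ i : Fin n, ∏ j ∈ range n, gmat (extT d) (extT e) i j = d i := by
      intro i
      rw [gmat_row hdpos hepos heq i.isLt, extT_apply]
    have hprod : ∏ p : Fin (n*n), gmat (extT d) (extT e)
        ((finProdFinEquiv.symm p).1 : ℕ) ((finProdFinEquiv.symm p).2 : ℕ) = h := by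
      rw [← Fintype.prod_equiv finProdFinEquiv
        (fun x : Fin n × Fin n => gmat (extT d) (extT e) (x.1 : ℕ) (x.2 : ℕ)) _
        (fun x => by rw [Equiv.symm_apply_apply])]
      rw [Fintype.prod_prod_type]
      calc ∏ i : Fin n, ∏ j : Fin n, gmat (extT d) (extT e) (i : ℕ) (j : ℕ)
          = ∏ i : Fin n, d i := by
            apply Finset.prod_congr rfl
            intro i _
            rw [Fin.prod_univ_eq_prod_range (fun j => gmat (extT d) (extT e) (i:ℕ) j) n]
            exact hrow i
        _ = h := hdp
    simp only [mem_coe, mem_filter, Fintype.mem_piFinset, mem_Icc]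
    refine ⟨fun p => ⟨gmat_pos hdpos hepos _ _, ?_⟩, hprod⟩
    · -- entry divides h
      set i := (finProdFinEquiv.symm p).1
      set j := (finProdFinEquiv.symm p).2
      have h1 : gmat (extT d) (extT e) (i:ℕ) (j:ℕ) ∣ ∏ j' ∈ range n, gmat (extT d) (extT e) (i:ℕ) j' :=
        Finset.dvd_prod_of_mem _ (mem_range.2 j.isLt)
      rw [hrow i] at h1
      have h2 : d i ∣ h := by
        rw [← hdp]
        exact Finset.dvd_prod_of_mem d (mem_univ i)
      exact Nat.le_of_dvd hh (h1.trans h2)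
  · rintro ⟨d, e⟩ hde ⟨d', e'⟩ hde' hfeq
    simp only [Finset.coe_product, Set.mem_prod, mem_coe] at hde hde'
    obtain ⟨hd, hdp⟩ := hTmem d hde.1
    obtain ⟨he, hep⟩ := hTmem e hde.2
    obtain ⟨hd', hdp'⟩ := hTmem d' hde'.1
    obtain ⟨he', hep'⟩ := hTmem e' hde'.2
    have hdpos := extT_pos (n := n) (d := d) fun i => (hd i).1
    have hepos := extT_pos (n := n) (d := e) fun i => (he i).1
    have hdpos' := extT_pos (n := n) (d := d') fun i => (hd' i).1
    have hepos' := extT_pos (n := n) (d := e') fun i => (he' i).1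
    have heq : cum (extT d) n = cum (extT e) n := by rw [cum_extT, cum_extT, hdp, hep]
    have heq' : cum (extT d') n = cum (extT e') n := by rw [cum_extT, cum_extT, hdp', hep']
    have hgm : ∀ (i j : Fin n), gmat (extT d) (extT e) (i:ℕ) (j:ℕ)
        = gmat (extT d') (extT e') (i:ℕ) (j:ℕ) := by
      intro i j
      have := congrFun hfeq (finProdFinEquiv (i, j))
      simpa only [Equiv.symm_apply_apply] using this
    have hD : d = d' := by
      funext i
      have h1 : ∏ j ∈ range n, gmat (extT d) (extT e) (i:ℕ) j = d i := by
        rw [gmat_row hdpos hepos heq i.isLt, extT_apply]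
      have h2 : ∏ j ∈ range n, gmat (extT d') (extT e') (i:ℕ) j = d' i := by
        rw [gmat_row hdpos' hepos' heq' i.isLt, extT_apply]
      rw [← h1, ← h2]
      apply Finset.prod_congr rfl
      intro j hj
      rw [mem_range] at hj
      exact hgm i ⟨j, hj⟩
    have hE : e = e' := by
      funext j
      have h1 : ∏ i ∈ range n, gmat (extT e) (extT d) (j:ℕ) i = e j := by
        rw [gmat_row hepos hdpos heq.symm j.isLt, extT_apply]
      have h2 : ∏ i ∈ range n, gmat (extT e') (extT d') (j:ℕ) i = e' j := by
        rw [gmat_row hepos' hdpos' heq'.symm j.isLt, extT_apply]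
      rw [← h1, ← h2]
      apply Finset.prod_congr rfl
      intro i hi
      rw [mem_range] at hi
      rw [gmat_comm (extT e) (extT d), gmat_comm (extT e') (extT d')]
      exact hgm ⟨i, hi⟩ j
    rw [Prod.mk.injEq]
    exact ⟨hD, hE⟩

lemma dni_nonneg (t : ℝ) : 0 ≤ distNearestInt t := abs_nonneg _

lemma dni_le_half (t : ℝ) : distNearestInt t ≤ 1/2 := abs_sub_round t

lemma minInv2_le_left (A t : ℝ) (hA : 0 ≤ A) : minInv2 A t ≤ A := by
  unfold minInv2; split
  · exact le_refl A
  · exact min_le_left _ _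

lemma minInv2_nonneg (A t : ℝ) (hA : 0 ≤ A) : 0 ≤ minInv2 A t := by
  unfold minInv2; split
  · exact hA
  · refine le_min hA ?_
    have h1 : 0 < distNearestInt t := lt_of_le_of_ne (dni_nonneg t) (Ne.symm (by assumption))
    positivity

lemma minInv2_le_inv (A t c : ℝ) (hc : 0 < c) (h : c ≤ distNearestInt t) :
    minInv2 A t ≤ 1/(2*c) := by
  unfold minInv2
  split
  · next h0 => rw [h0] at h; linarith
  · refine le_trans (min_le_right _ _) ?_
    apply one_div_le_one_div_of_le (by positivity)
    nlinarith

lemma count_block {α : ℝ} {a : ℤ} {q : ℕ} (hq : 2 ≤ q) (hgcd : Int.gcd a q = 1)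
    (hα : |α - (a:ℝ)/q| ≤ 1/(q:ℝ)^2) (b : ℕ) {t : ℝ} (ht : 0 < t) :
    ((((Icc (b*q+1) (b*q+q))).filter fun h : ℕ => distNearestInt (α*h) < t).card : ℝ)
      ≤ 2*q*t + 3 := by
  have hq0 : (0:ℝ) < q := by positivity
  set β : ℝ := α - (a:ℝ)/q with hβ
  set c : ℝ := -((q:ℝ)*β*(b*q)) with hc
  set u : ℝ := q*t+1 with hu
  set z : ℕ → ℤ := fun h => a*h - q * round (α*h) with hz
  have hmem : ∀ h ∈ (Icc (b*q+1) (b*q+q)).filter fun h : ℕ => distNearestInt (α*h) < t,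
      z h ∈ Finset.Icc ⌈c - u⌉ ⌊c + u⌋ := by
    intro h hh
    simp only [mem_filter, mem_Icc] at hh
    obtain ⟨⟨hh1, hh2⟩, hdist⟩ := hh
    have hzr : (z h : ℝ) = q*(α*h - round (α*h)) - q*β*h := by
      simp only [hz, hβ]
      push_cast
      field_simp
      ring
    have hj : (h:ℝ) = b*q + (h - b*q : ℕ) := by
      have : b*q ≤ h := by omega
      push_cast [this]
      ring
    have hjq : ((h - b*q : ℕ):ℝ) ≤ q := by
      have : h - b*q ≤ q := by omega
      exact_mod_cast this
    have hjpos : (0:ℝ) ≤ ((h - b*q : ℕ):ℝ) := by positivity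
    have hβq : |β| ≤ 1/(q:ℝ)^2 := hα
    have hdiff : |(z h : ℝ) - c| ≤ q*t + 1 := by
      rw [hzr, hc]
      have e1 : q*(α*h - round (α*h)) - q*β*h - -(q*β*(b*q))
          = q*(α*h - round (α*h)) - q*β*(h - b*q) := by ring
      rw [e1]
      have b1 : |q*(α*h - round (α*h))| ≤ q*t := by
        rw [abs_mul, abs_of_pos hq0]
        have : |α*h - round (α*h)| ≤ t := le_of_lt hdist
        nlinarith
      have b2 : |q*β*((h:ℝ) - b*q)| ≤ 1 := by
        rw [abs_mul, abs_mul, abs_of_pos hq0]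
        have e2 : |(h:ℝ) - b*q| = ((h - b*q : ℕ):ℝ) := by
          rw [hj]
          rw [abs_of_nonneg (by linarith)]
          ring
        rw [e2]
        calc (q:ℝ) * |β| * ((h - b*q : ℕ):ℝ) ≤ q * (1/q^2) * q := by
              apply mul_le_mul
              · exact mul_le_mul_of_nonneg_left hβq (le_of_lt hq0)
              · exact hjq
              · exact hjpos
              · positivity
          _ = 1 := by field_simp
      calc |q*(α*h - round (α*h)) - q*β*((h:ℝ) - b*q)|
          ≤ |q*(α*h - round (α*h))| + |q*β*((h:ℝ) - b*q)| := abs_sub _ _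
        _ ≤ q*t + 1 := by linarith
    rw [mem_Icc]
    rw [abs_le] at hdiff
    constructor
    · rw [Int.ceil_le]; push_cast; linarith [hdiff.1]
    · rw [Int.le_floor]; push_cast; linarith [hdiff.2]
  have hinj : Set.InjOn z ((Icc (b*q+1) (b*q+q)).filter fun h : ℕ => distNearestInt (α*h) < t) := by
    intro h1 hh1 h2 hh2 hzz
    simp only [coe_filter, Set.mem_setOf_eq, mem_Icc] at hh1 hh2
    have hd : (q:ℤ) ∣ a*h1 - a*h2 := by
      have : (q:ℤ) ∣ (q * round (α*h1) - q * round (α*h2)) := by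
        exact Dvd.dvd.sub (dvd_mul_right _ _) (dvd_mul_right _ _)
      have he : a*h1 - a*h2 = (z h1 - z h2) + (q * round (α*h1) - q * round (α*h2)) := by
        simp only [hz]; ring
      rw [he, hzz, sub_self, zero_add]
      exact this
    have hcop : IsCoprime (q:ℤ) a := by
      rw [Int.isCoprime_iff_gcd_eq_one, Int.gcd_comm]
      exact hgcd
    have hd2 : (q:ℤ) ∣ (h1:ℤ) - h2 := by
      have : a*h1 - a*h2 = ((h1:ℤ) - h2) * a := by ring
      rw [this] at hd
      exact hcop.dvd_of_dvd_mul_right hd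
    have hb : |(h1:ℤ) - h2| < q := by
      rw [abs_lt]
      omega
    obtain ⟨k, hk⟩ := hd2
    have : k = 0 := by
      rcases lt_trichotomy k 0 with h | h | h
      · nlinarith [hk, hb]
      · exact h
      · nlinarith [hk, hb]
    rw [this, mul_zero] at hk
    omega
  have hcard := Finset.card_le_card_of_injOn z hmem hinj
  have hIcc : ((Finset.Icc ⌈c - u⌉ ⌊c + u⌋).card : ℝ) ≤ 2*q*t + 3 := by
    rw [Int.card_Icc]
    have h1 : (⌊c + u⌋ : ℝ) ≤ c + u := Int.floor_le _
    have h2 : c - u ≤ (⌈c - u⌉ : ℝ) := Int.le_ceil _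
    rcases le_or_gt (⌊c + u⌋ + 1 - ⌈c - u⌉) 0 with h3 | h3
    · rw [Int.toNat_of_nonpos h3]
      simp only [Nat.cast_zero]
      positivity
    · have h4 : (((⌊c + u⌋ + 1 - ⌈c - u⌉).toNat : ℕ) : ℝ) = ((⌊c + u⌋:ℝ) + 1 - ⌈c - u⌉) := by
        rw [← Int.cast_natCast, Int.toNat_of_nonneg (le_of_lt h3)]
        push_cast
        ring
      rw [h4]
      have h5 : u = q*t+1 := hu
      linarith
  calc ((((Icc (b*q+1) (b*q+q))).filter fun h : ℕ => distNearestInt (α*h) < t).card : ℝ)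
      ≤ ((Finset.Icc ⌈c - u⌉ ⌊c + u⌋).card : ℝ) := by exact_mod_cast hcard
    _ ≤ 2*q*t + 3 := hIcc

lemma count_all {α : ℝ} {a : ℤ} {q : ℕ} (hq : 2 ≤ q) (hgcd : Int.gcd a q = 1)
    (hα : |α - (a:ℝ)/q| ≤ 1/(q:ℝ)^2) (X : ℕ) (hX : 1 ≤ X) {t : ℝ} (ht : 0 < t) :
    (((Icc 1 X).filter fun h : ℕ => distNearestInt (α*h) < t).card : ℝ)
      ≤ ((X-1)/q + 1 : ℕ) * (2*q*t + 3) := by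
  set B0 : ℕ := (X-1)/q + 1 with hB0
  have hsub : (Icc 1 X).filter (fun h : ℕ => distNearestInt (α*h) < t)
      ⊆ (range B0).biUnion fun b => (Icc (b*q+1) (b*q+q)).filter
          fun h : ℕ => distNearestInt (α*h) < t := by
    intro h hh
    simp only [mem_filter, mem_Icc] at hh
    obtain ⟨⟨hh1, hh2⟩, hh3⟩ := hh
    set b := (h-1)/q with hb
    have hmod : q * b + (h-1) % q = h - 1 := Nat.div_add_mod (h-1) q
    have hrlt : (h-1) % q < q := Nat.mod_lt _ (by omega)
    rw [mem_biUnion]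
    refine ⟨b, ?_, ?_⟩
    · rw [mem_range, hB0]
      have hble : b ≤ (X-1)/q := Nat.div_le_div_right (Nat.sub_le_sub_right hh2 1)
      exact Nat.lt_succ_of_le hble
    · simp only [mem_filter, mem_Icc]
      refine ⟨⟨?_, ?_⟩, hh3⟩
      · have h4 : b*q ≤ h - 1 := Nat.div_mul_le_self (h-1) q
        have h5 : b*q + 1 ≤ (h-1) + 1 := Nat.succ_le_succ h4
        rwa [Nat.sub_add_cancel hh1] at h5
      · have h6 : (h-1) + 1 = q*b + ((h-1)%q + 1) := by rw [← Nat.add_assoc, hmod]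
        calc h = (h-1) + 1 := (Nat.sub_add_cancel hh1).symm
          _ = q*b + ((h-1)%q + 1) := h6
          _ ≤ q*b + q := Nat.add_le_add_left hrlt _
          _ = b*q + q := by rw [Nat.mul_comm]
  calc (((Icc 1 X).filter fun h : ℕ => distNearestInt (α*h) < t).card : ℝ)
      ≤ (((range B0).biUnion fun b => (Icc (b*q+1) (b*q+q)).filter
          fun h : ℕ => distNearestInt (α*h) < t).card : ℝ) := by
        exact_mod_cast Finset.card_le_card hsub
    _ ≤ ∑ b ∈ range B0, ((((Icc (b*q+1) (b*q+q))).filter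
          fun h : ℕ => distNearestInt (α*h) < t).card : ℝ) := by
        exact_mod_cast Finset.card_biUnion_le
    _ ≤ ∑ b ∈ range B0, (2*(q:ℝ)*t + 3) := by
        apply Finset.sum_le_sum
        intro b _
        exact count_block hq hgcd hα b ht
    _ = B0 * (2*q*t + 3) := by
        rw [Finset.sum_const, card_range, nsmul_eq_mul]

lemma sum_min_le {α : ℝ} {a : ℤ} {q : ℕ} (hq : 2 ≤ q) (hgcd : Int.gcd a q = 1)
    (hα : |α - (a:ℝ)/q| ≤ 1/(q:ℝ)^2) {y : ℝ} (hy : 2 ≤ y) (X : ℕ) (hX : 1 ≤ X) :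
    ∑ h ∈ Icc 1 X, minInv2 y (α*h)
      ≤ X + (((X-1)/q + 1 : ℕ):ℝ) * (4*y + 16*q*Real.log y) := by
  have hq0 : (0:ℝ) < q := by positivity
  have hy0 : (0:ℝ) < y := by linarith
  set B0 : ℕ := (X-1)/q + 1 with hB0
  set g : ℕ → ℝ := fun s => if s = 0 then y else min y (q/s) with hg
  have hg0 : g 0 = y := by simp [hg]
  have hgq : g q = 1 := by
    simp only [hg]
    rw [if_neg (by omega), div_self hq0.ne', min_eq_right (by linarith)]
  have hgnn : ∀ s, 0 ≤ g s := by
    intro s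
    simp only [hg]
    split
    · linarith
    · exact le_min (by linarith) (by positivity)
  have hganti : ∀ s, g (s+1) ≤ g s := by
    intro s
    simp only [hg]
    rcases Nat.eq_zero_or_pos s with rfl | hs
    · norm_num
    · rw [if_neg (by omega), if_neg (by omega)]
      refine min_le_min (le_refl y) ?_
      have hs' : (0:ℝ) < (s:ℝ) := by exact_mod_cast hs
      have hs'' : (s:ℝ) ≤ ((s+1:ℕ):ℝ) := by push_cast; linarith
      gcongr
  have hpoint : ∀ h : ℕ, minInv2 y (α*h)
      ≤ g q + ∑ s ∈ range q, (g s - g (s+1)) *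
          (if distNearestInt (α*h) < ((s:ℝ)+1)/(2*q) then 1 else 0) := by
    intro h
    set w := distNearestInt (α*h) with hw
    have hw0 : 0 ≤ w := dni_nonneg _
    have hwh : w ≤ 1/2 := dni_le_half _
    rcases lt_or_ge w (1/2) with hlt | hge
    · set s₀ := ⌊2*q*w⌋₊ with hs₀
      have hs₀q : s₀ < q := by
        have h1 : 2*(q:ℝ)*w < ((q:ℕ):ℝ) := by push_cast; nlinarith
        exact (Nat.floor_lt (by positivity)).2 h1
      have hlow : (s₀:ℝ) ≤ 2*q*w := Nat.floor_le (by positivity)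
      have hupp : w < ((s₀:ℝ)+1)/(2*q) := by
        rw [lt_div_iff₀ (by positivity)]
        have := Nat.lt_floor_add_one (2*(q:ℝ)*w)
        nlinarith
      have hmain : minInv2 y (α*h) ≤ g s₀ := by
        rcases Nat.eq_zero_or_pos s₀ with h0 | hpos
        · rw [h0, hg0]
          exact minInv2_le_left _ _ hy0.le
        · have hc : (0:ℝ) < (s₀:ℝ)/(2*q) := by
            have : (0:ℝ) < (s₀:ℝ) := by exact_mod_cast hpos
            positivity
          have hcle : (s₀:ℝ)/(2*q) ≤ w := by
            rw [div_le_iff₀ (by positivity)]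
            nlinarith
          have h1 := minInv2_le_inv y (α*h) _ hc hcle
          have h2 : 1/(2*((s₀:ℝ)/(2*q))) = q/s₀ := by
            have : (0:ℝ) < (s₀:ℝ) := by exact_mod_cast hpos
            field_simp
          simp only [hg]
          rw [if_neg (by omega)]
          exact le_min (minInv2_le_left _ _ hy0.le) (h2 ▸ h1)
      have htel : ∑ s ∈ Finset.Ico s₀ q, (g s - g (s+1)) = g s₀ - g q := by
        rw [Finset.sum_Ico_eq_sub _ (le_of_lt hs₀q), Finset.sum_range_sub' g,
          Finset.sum_range_sub' g]
        ring
      have hind : ∑ s ∈ Finset.Ico s₀ q, (g s - g (s+1))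
          = ∑ s ∈ Finset.Ico s₀ q, (g s - g (s+1)) *
              (if w < ((s:ℝ)+1)/(2*q) then 1 else 0) := by
        apply Finset.sum_congr rfl
        intro s hs
        rw [mem_Ico] at hs
        rw [if_pos, mul_one]
        have hmono : ((s₀:ℝ)+1)/(2*q) ≤ ((s:ℝ)+1)/(2*q) := by
          gcongr
          exact_mod_cast hs.1
        linarith
      have hsub : ∑ s ∈ Finset.Ico s₀ q, (g s - g (s+1)) *
            (if w < ((s:ℝ)+1)/(2*q) then 1 else 0)
          ≤ ∑ s ∈ range q, (g s - g (s+1)) *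
            (if w < ((s:ℝ)+1)/(2*q) then 1 else 0) := by
        apply Finset.sum_le_sum_of_subset_of_nonneg
        · intro s hs
          rw [mem_Ico] at hs
          rw [mem_range]
          omega
        · intro s _ _
          have := hganti s
          split
          · linarith
          · simp
      calc minInv2 y (α*h) ≤ g s₀ := hmain
        _ = g q + (g s₀ - g q) := by ring
        _ = g q + ∑ s ∈ Finset.Ico s₀ q, (g s - g (s+1)) := by rw [htel]
        _ ≤ g q + ∑ s ∈ range q, (g s - g (s+1)) *
            (if w < ((s:ℝ)+1)/(2*q) then 1 else 0) := by
            rw [hind] at *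
            linarith [hsub]
    · have h1 : minInv2 y (α*h) ≤ 1 := by
        have h2 := minInv2_le_inv y (α*h) (1/2) (by norm_num) hge
        norm_num at h2
        linarith
      have h2 : ∑ s ∈ range q, (g s - g (s+1)) *
          (if w < ((s:ℝ)+1)/(2*q) then 1 else 0) = 0 := by
        apply Finset.sum_eq_zero
        intro s hs
        rw [mem_range] at hs
        rw [if_neg, mul_zero]
        push_neg
        have hsq : (s:ℝ)+1 ≤ q := by exact_mod_cast hs
        have : ((s:ℝ)+1)/(2*q) ≤ 1/2 := by
          rw [div_le_iff₀ (by positivity)]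
          linarith
        linarith
      rw [h2, hgq]
      linarith
  have hboole : ∀ s : ℕ, ∑ h ∈ Icc 1 X, (if distNearestInt (α*h) < ((s:ℝ)+1)/(2*q)
        then (1:ℝ) else 0)
      = (((Icc 1 X).filter fun h : ℕ => distNearestInt (α*h) < ((s:ℝ)+1)/(2*q)).card : ℝ) := by
    intro s
    rw [Finset.sum_boole]
  have hswap : ∑ h ∈ Icc 1 X, minInv2 y (α*h)
      ≤ X * g q + ∑ s ∈ range q, (g s - g (s+1)) *
          (((Icc 1 X).filter fun h : ℕ => distNearestInt (α*h) < ((s:ℝ)+1)/(2*q)).card : ℝ) := by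
    calc ∑ h ∈ Icc 1 X, minInv2 y (α*h)
        ≤ ∑ h ∈ Icc 1 X, (g q + ∑ s ∈ range q, (g s - g (s+1)) *
            (if distNearestInt (α*h) < ((s:ℝ)+1)/(2*q) then 1 else 0)) :=
          Finset.sum_le_sum fun h _ => hpoint h
      _ = X * g q + ∑ h ∈ Icc 1 X, ∑ s ∈ range q, (g s - g (s+1)) *
            (if distNearestInt (α*h) < ((s:ℝ)+1)/(2*q) then 1 else 0) := by
          rw [Finset.sum_add_distrib, Finset.sum_const, Nat.card_Icc]
          simp only [Nat.add_sub_cancel, nsmul_eq_mul]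
      _ = X * g q + ∑ s ∈ range q, ∑ h ∈ Icc 1 X, (g s - g (s+1)) *
            (if distNearestInt (α*h) < ((s:ℝ)+1)/(2*q) then 1 else 0) := by
          rw [Finset.sum_comm]
      _ = X * g q + ∑ s ∈ range q, (g s - g (s+1)) *
            (((Icc 1 X).filter fun h : ℕ => distNearestInt (α*h) < ((s:ℝ)+1)/(2*q)).card : ℝ) := by
          congr 1
          apply Finset.sum_congr rfl
          intro s _
          rw [← Finset.mul_sum, hboole s]
  have hcount : ∀ s ∈ range q, (g s - g (s+1)) *
        (((Icc 1 X).filter fun h : ℕ => distNearestInt (α*h) < ((s:ℝ)+1)/(2*q)).card : ℝ)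
      ≤ (g s - g (s+1)) * ((B0:ℝ) * ((s:ℝ)+4)) := by
    intro s _
    apply mul_le_mul_of_nonneg_left _ (by linarith [hganti s])
    have ht : (0:ℝ) < ((s:ℝ)+1)/(2*q) := by positivity
    have h1 := count_all hq hgcd hα X hX ht
    have h2 : 2*(q:ℝ)*(((s:ℝ)+1)/(2*q)) + 3 = (s:ℝ)+4 := by field_simp; ring
    rw [h2] at h1
    exact h1
  have habel : ∑ s ∈ range q, (g s - g (s+1)) * ((s:ℝ)+4)
      ≤ 4*y + 4*∑ s ∈ range q, g (s+1) := by
    set F : ℕ → ℝ := fun s => ((s:ℝ)+1) * g s with hF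
    have h1 : ∀ s ∈ range q, (g s - g (s+1)) * ((s:ℝ)+4)
        ≤ 4 * (F s - F (s+1)) + 4 * g (s+1) := by
      intro s _
      have hg1 := hganti s
      have hF1 : F s = ((s:ℝ)+1) * g s := rfl
      have hF2 : F (s+1) = ((s:ℝ)+2) * g (s+1) := by
        simp only [hF]
        push_cast
        ring
      rw [hF1, hF2]
      nlinarith [hgnn (s+1), hgnn s]
    calc ∑ s ∈ range q, (g s - g (s+1)) * ((s:ℝ)+4)
        ≤ ∑ s ∈ range q, (4 * (F s - F (s+1)) + 4 * g (s+1)) := Finset.sum_le_sum h1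
      _ = 4 * ∑ s ∈ range q, (F s - F (s+1)) + 4 * ∑ s ∈ range q, g (s+1) := by
          rw [Finset.sum_add_distrib, Finset.mul_sum, Finset.mul_sum]
      _ = 4 * (F 0 - F q) + 4 * ∑ s ∈ range q, g (s+1) := by
          rw [Finset.sum_range_sub' F]
      _ ≤ 4*y + 4*∑ s ∈ range q, g (s+1) := by
          have hF0 : F 0 = g 0 := by simp [hF]
          have hFq : 0 ≤ F q := mul_nonneg (by positivity) (hgnn q)
          rw [hF0, hg0]
          linarith
  have hlog : ∑ s ∈ range q, g (s+1) ≤ 4*q*Real.log y := by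
    set c : ℝ := q/y with hc
    have hc0 : 0 < c := by positivity
    have h1 : ∀ s ∈ range q, g (s+1) ≤ 2*q * (1/(c+(s:ℝ)+1)) := by
      intro s _
      simp only [hg, if_neg (Nat.succ_ne_zero s)]
      have hd0 : (0:ℝ) < c+(s:ℝ)+1 := by positivity
      push_cast
      rcases le_total c ((s:ℝ)+1) with hcase | hcase
      · refine le_trans (min_le_right _ _) ?_
        rw [mul_one_div, div_le_div_iff₀ (by positivity) hd0]
        nlinarith
      · refine le_trans (min_le_left _ _) ?_
        rw [mul_one_div, le_div_iff₀ hd0]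
        have hyc : y*c = q := by rw [hc]; field_simp
        nlinarith
    calc ∑ s ∈ range q, g (s+1)
        ≤ ∑ s ∈ range q, 2*q * (1/(c+(s:ℝ)+1)) := Finset.sum_le_sum h1
      _ = 2*q * ∑ s ∈ range q, 1/(c+(s:ℝ)+1) := by rw [Finset.mul_sum]
      _ ≤ 2*q * (Real.log (c+q) - Real.log c) := by
          apply mul_le_mul_of_nonneg_left (log_telescope c hc0 q) (by positivity)
      _ = 2*q * Real.log (1+y) := by
          rw [← Real.log_div (by positivity) hc0.ne']
          congr 2
          rw [hc]
          field_simp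
      _ ≤ 2*q * (2*Real.log y) := by
          have hlog1 : Real.log (1+y) ≤ Real.log (y^2) :=
            Real.log_le_log (by linarith) (by nlinarith)
          rw [Real.log_pow] at hlog1
          push_cast at hlog1
          apply mul_le_mul_of_nonneg_left _ (by positivity)
          linarith
      _ = 4*q*Real.log y := by ring
  have hB0nn : (0:ℝ) ≤ (B0:ℕ) := by positivity
  calc ∑ h ∈ Icc 1 X, minInv2 y (α*h)
      ≤ X * g q + ∑ s ∈ range q, (g s - g (s+1)) *
          (((Icc 1 X).filter fun h : ℕ => distNearestInt (α*h) < ((s:ℝ)+1)/(2*q)).card : ℝ) :=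
        hswap
    _ ≤ X * g q + ∑ s ∈ range q, (g s - g (s+1)) * ((B0:ℝ) * ((s:ℝ)+4)) :=
        add_le_add le_rfl (Finset.sum_le_sum hcount)
    _ = X * g q + (B0:ℝ) * ∑ s ∈ range q, (g s - g (s+1)) * ((s:ℝ)+4) := by
        rw [Finset.mul_sum]
        congr 1
        apply Finset.sum_congr rfl
        intro s _
        ring
    _ ≤ X * 1 + (B0:ℝ) * (4*y + 4*(4*q*Real.log y)) := by
        rw [hgq]
        have hs1 : ∑ s ∈ range q, (g s - g (s+1)) * ((s:ℝ)+4)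
            ≤ 4*y + 4*(4*q*Real.log y) := by
          have := habel
          have := hlog
          nlinarith
        nlinarith [hB0nn]
    _ = X + (B0:ℝ) * (4*y + 16*q*Real.log y) := by ring

/-- **estimate of `W₄`.** Let `n ≥ 2` be fixed. There is a constant `C`
(depending only on `n`) such that for all positive integers `K, y, q` with `q ≥ 2`,
`y ≥ 2`, and any real `α` with `|α − a/q| ≤ 1/q²`, `gcd(a,q) = 1`, the quantity
`W₄ = ∑_{h ≤ (n−1)! K y^{n−1}} τ_n(h) min(y, 1/(2‖αh‖))` satisfies
`W₄² ≤ C K² y^{2n} (1/q + 1/(K y^{n−1}) + 1/y + q/(K yⁿ)) (ln(K yⁿ))^{n²}`. -/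
theorem W4_sq_le (n : ℕ) (hn : 2 ≤ n) :
    ∃ C : ℝ, 0 < C ∧ ∀ K y q : ℕ, 0 < K → 2 ≤ y → 2 ≤ q →
      ∀ (α : ℝ) (a : ℤ), |α - (a : ℝ) / q| ≤ 1 / (q : ℝ) ^ 2 → Int.gcd a q = 1 →
        (∑ h ∈ Finset.Icc 1 ((n - 1).factorial * K * y ^ (n - 1)),
            (tau n h : ℝ) * minInv2 (y : ℝ) (α * h)) ^ 2
          ≤ C * (K : ℝ) ^ 2 * (y : ℝ) ^ (2 * n) *
              (1 / (q : ℝ) + 1 / ((K : ℝ) * (y : ℝ) ^ (n - 1)) + 1 / (y : ℝ) +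
                (q : ℝ) / ((K : ℝ) * (y : ℝ) ^ n)) *
              (Real.log ((K : ℝ) * (y : ℝ) ^ n)) ^ (n ^ 2) := by
  have hc01 : (1:ℝ) ≤ ((n-1).factorial : ℝ) := by
    exact_mod_cast Nat.one_le_iff_ne_zero.2 (Nat.factorial_ne_zero _)
  set c0 : ℝ := ((n-1).factorial : ℝ) with hc0
  have hlc0 : 0 ≤ Real.log c0 := Real.log_nonneg hc01
  set c1 : ℝ := 2 + Real.log c0 with hc1
  have hc12 : 2 ≤ c1 := by linarith
  have hnn4 : 4 ≤ n*n := Nat.mul_le_mul hn hn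
  set M : ℕ := n*n - 1 with hM
  have hMeq : n*n = M + 1 := by omega
  have hMn : M + 1 = n^2 := by
    have : n^2 = n*n := by ring
    omega
  refine ⟨41 * c0^2 * c1^M, by positivity, ?_⟩
  intro K y q hK hy hq α a hα hgcd
  have hq0 : (0:ℝ) < q := by positivity
  have hq2 : (2:ℝ) ≤ q := by exact_mod_cast hq
  have hK1 : (1:ℝ) ≤ K := by exact_mod_cast hK
  have hY2 : (2:ℝ) ≤ (y:ℝ) := by exact_mod_cast hy
  have hY1 : (1:ℝ) ≤ (y:ℝ) := by linarith
  have hY0 : (0:ℝ) < (y:ℝ) := by linarith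
  set X : ℕ := (n-1).factorial * K * y^(n-1) with hXdef
  have hX0 : 0 < X := by
    refine Nat.mul_pos (Nat.mul_pos (Nat.factorial_pos _) hK) (pow_pos (by omega) _)
  have hX1 : 1 ≤ X := hX0
  have hXr : (X:ℝ) = c0 * K * (y:ℝ)^(n-1) := by rw [hXdef]; push_cast; ring
  have hXr0 : (1:ℝ) ≤ (X:ℝ) := by exact_mod_cast hX1
  set L : ℝ := Real.log ((K:ℝ) * (y:ℝ)^n) with hL
  have hupow : (1:ℝ) ≤ (y:ℝ)^(n-1) := one_le_pow₀ hY1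
  have hYn : (y:ℝ)^n = (y:ℝ)^(n-1) * y := by
    rw [← pow_succ]
    congr 1
    omega
  have hYn1 : (1:ℝ) ≤ (y:ℝ)^n := one_le_pow₀ hY1
  have hr2 : ((y:ℝ)^n)^2 = (y:ℝ)^(2*n) := by
    rw [← pow_mul]
    congr 1
    ring
  have hYn4 : (4:ℝ) ≤ (K:ℝ) * (y:ℝ)^n := by
    have h1 : (y:ℝ)^2 ≤ (y:ℝ)^n := pow_le_pow_right₀ hY1 hn
    nlinarith
  have hL1 : 1 ≤ L := by
    have he : Real.exp 1 ≤ 4 := by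
      have := Real.exp_one_lt_d9
      linarith
    have h1 : (1:ℝ) ≤ Real.log 4 := by
      calc (1:ℝ) = Real.log (Real.exp 1) := (Real.log_exp 1).symm
        _ ≤ Real.log 4 := Real.log_le_log (Real.exp_pos 1) he
    have h2 : Real.log 4 ≤ L := Real.log_le_log (by norm_num) hYn4
    linarith
  have hly : Real.log y ≤ L := by
    apply Real.log_le_log hY0
    nlinarith
  have hly0 : 0 ≤ Real.log y := Real.log_nonneg hY1
  -- bound on 1 + log X
  have hAc : 1 + Real.log X ≤ c1 * L := by
    have h1 : Real.log X = Real.log c0 + Real.log ((K:ℝ) * (y:ℝ)^(n-1)) := by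
      rw [hXr, mul_assoc]
      exact Real.log_mul (by positivity) (by positivity)
    have h2 : Real.log ((K:ℝ) * (y:ℝ)^(n-1)) ≤ L := by
      apply Real.log_le_log (by positivity)
      have : (y:ℝ)^(n-1) ≤ (y:ℝ)^n := by nlinarith
      nlinarith
    rw [h1, hc1]
    nlinarith [mul_nonneg hlc0 (sub_nonneg.2 hL1)]
  have hlogX0 : 0 ≤ 1 + Real.log X := by
    have := Real.log_nonneg hXr0
    linarith
  -- tau sum bound
  have hτ : ∑ h ∈ Icc 1 X, ((tau n h:ℝ))^2 ≤ (X:ℝ) * (1 + Real.log X)^M := by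
    calc ∑ h ∈ Icc 1 X, ((tau n h:ℝ))^2 ≤ ∑ h ∈ Icc 1 X, ((tau (n*n) h : ℕ):ℝ) := by
          apply Finset.sum_le_sum
          intro h hh
          rw [mem_Icc] at hh
          have := tau_sq_le n h hh.1
          exact_mod_cast this
      _ = ∑ h ∈ Icc 1 X, ((tau (M+1) h : ℕ):ℝ) := by rw [← hMeq]
      _ ≤ (X:ℝ) * (1 + Real.log X)^M := sum_tau_le M X hX1
  -- min sum bound
  have hv := sum_min_le hq hgcd hα hY2 X hX1
  have hB0 : ((((X-1)/q + 1 : ℕ)):ℝ) ≤ (X:ℝ)/q + 1 := by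
    have h1 : (((X-1)/q : ℕ):ℝ) ≤ ((X-1:ℕ):ℝ)/(q:ℝ) := Nat.cast_div_le
    have h2 : ((X-1:ℕ):ℝ)/(q:ℝ) ≤ (X:ℝ)/q := by
      gcongr
      exact_mod_cast Nat.sub_le X 1
    rw [Nat.cast_add, Nat.cast_one]
    linarith
  have hv2 : ∑ h ∈ Icc 1 X, minInv2 (y:ℝ) (α*h)
      ≤ (X:ℝ) + ((X:ℝ)/q + 1) * (4*(y:ℝ) + 16*q*Real.log y) := by
    have h3 : (0:ℝ) ≤ 4*(y:ℝ) + 16*q*Real.log y := by positivity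
    nlinarith [hv, hB0]
  -- Cauchy-Schwarz
  have hCS := Finset.sum_mul_sq_le_sq_mul_sq (Icc 1 X) (fun h => (tau n h:ℝ))
    (fun h => minInv2 (y:ℝ) (α*h))
  have hτ0 : (0:ℝ) ≤ ∑ h ∈ Icc 1 X, ((tau n h:ℝ))^2 :=
    Finset.sum_nonneg fun h _ => sq_nonneg _
  have hv0 : (0:ℝ) ≤ ∑ h ∈ Icc 1 X, minInv2 (y:ℝ) (α*h) :=
    Finset.sum_nonneg fun h _ => minInv2_nonneg _ _ hY0.le
  have hvsq : ∑ h ∈ Icc 1 X, (minInv2 (y:ℝ) (α*h))^2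
      ≤ (y:ℝ) * ∑ h ∈ Icc 1 X, minInv2 (y:ℝ) (α*h) := by
    rw [Finset.mul_sum]
    apply Finset.sum_le_sum
    intro h _
    have h1 := minInv2_le_left (y:ℝ) (α*h) hY0.le
    have h2 := minInv2_nonneg (y:ℝ) (α*h) hY0.le
    nlinarith
  -- numeric core
  set Q : ℝ := 1 / (q : ℝ) + 1 / ((K : ℝ) * (y : ℝ) ^ (n - 1)) + 1 / (y : ℝ) +
      (q : ℝ) / ((K : ℝ) * (y : ℝ) ^ n) with hQdef
  have hQ1 : 1/(q:ℝ) ≤ Q := by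
    rw [hQdef]
    have : (0:ℝ) ≤ 1 / ((K : ℝ) * (y : ℝ) ^ (n - 1)) := by positivity
    have : (0:ℝ) ≤ 1 / (y:ℝ) := by positivity
    have : (0:ℝ) ≤ (q : ℝ) / ((K : ℝ) * (y : ℝ) ^ n) := by positivity
    linarith
  have hQ2 : 1 / ((K : ℝ) * (y : ℝ) ^ (n - 1)) ≤ Q := by
    rw [hQdef]
    have : (0:ℝ) ≤ 1/(q:ℝ) := by positivity
    have : (0:ℝ) ≤ 1 / (y:ℝ) := by positivity
    have : (0:ℝ) ≤ (q : ℝ) / ((K : ℝ) * (y : ℝ) ^ n) := by positivity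
    linarith
  have hQ3 : 1/(y:ℝ) ≤ Q := by
    rw [hQdef]
    have : (0:ℝ) ≤ 1/(q:ℝ) := by positivity
    have : (0:ℝ) ≤ 1 / ((K : ℝ) * (y : ℝ) ^ (n - 1)) := by positivity
    have : (0:ℝ) ≤ (q : ℝ) / ((K : ℝ) * (y : ℝ) ^ n) := by positivity
    linarith
  have hQ4 : (q : ℝ) / ((K : ℝ) * (y : ℝ) ^ n) ≤ Q := by
    rw [hQdef]
    have : (0:ℝ) ≤ 1/(q:ℝ) := by positivity
    have : (0:ℝ) ≤ 1 / ((K : ℝ) * (y : ℝ) ^ (n - 1)) := by positivity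
    have : (0:ℝ) ≤ 1 / (y:ℝ) := by positivity
    linarith
  have hQ0 : 0 ≤ Q := le_trans (by positivity) hQ1
  set T : ℝ := c0^2 * (K:ℝ)^2 * ((y:ℝ)^n)^2 with hT
  have hT0 : 0 ≤ T := by positivity
  have hTQL : 0 ≤ T * Q * L := by positivity
  have core : (X:ℝ)*(y:ℝ)*((X:ℝ) + ((X:ℝ)/q + 1)*(4*(y:ℝ) + 16*q*Real.log y))
      ≤ 41 * T * Q * L := by
    have expand : (X:ℝ)*(y:ℝ)*((X:ℝ) + ((X:ℝ)/q + 1)*(4*(y:ℝ) + 16*q*Real.log y))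
        = (X:ℝ)^2*(y:ℝ) + 4*(X:ℝ)^2*(y:ℝ)^2*(1/q) + 16*(X:ℝ)^2*(y:ℝ)*Real.log y
          + 4*(X:ℝ)*(y:ℝ)^2 + 16*(X:ℝ)*(y:ℝ)*q*Real.log y := by
      field_simp
      ring
    have e1 : (X:ℝ)^2*(y:ℝ) = T*(1/(y:ℝ)) := by
      rw [hXr, hT, hYn]
      field_simp
    have e2 : (X:ℝ)^2*(y:ℝ)^2 = T := by
      rw [hXr, hT, hYn]
      ring
    have e4 : (X:ℝ)*(y:ℝ)^2 * c0 = T * (1/((K:ℝ)*(y:ℝ)^(n-1))) := by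
      rw [hXr, hT, hYn]
      field_simp
    have e5 : (X:ℝ)*(y:ℝ)*(q:ℝ) * c0 = T * ((q:ℝ)/((K:ℝ)*(y:ℝ)^n)) := by
      rw [hXr, hT, hYn]
      field_simp
    have b1 : (X:ℝ)^2*(y:ℝ) ≤ T*Q*L := by
      rw [e1]
      calc T*(1/(y:ℝ)) ≤ T*Q := mul_le_mul_of_nonneg_left hQ3 hT0
        _ ≤ T*Q*L := le_mul_of_one_le_right (by positivity) hL1
    have b2 : 4*(X:ℝ)^2*(y:ℝ)^2*(1/q) ≤ 4*(T*Q*L) := by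
      have h1 : (X:ℝ)^2*(y:ℝ)^2*(1/(q:ℝ)) ≤ T*Q*L := by
        rw [e2]
        calc T*(1/(q:ℝ)) ≤ T*Q := mul_le_mul_of_nonneg_left hQ1 hT0
          _ ≤ T*Q*L := le_mul_of_one_le_right (by positivity) hL1
      calc 4*(X:ℝ)^2*(y:ℝ)^2*(1/(q:ℝ)) = 4*((X:ℝ)^2*(y:ℝ)^2*(1/(q:ℝ))) := by ring
        _ ≤ 4*(T*Q*L) := mul_le_mul_of_nonneg_left h1 (by norm_num)
    have b3 : 16*(X:ℝ)^2*(y:ℝ)*Real.log y ≤ 16*(T*Q*L) := by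
      have h1 : (X:ℝ)^2*(y:ℝ)*Real.log y ≤ T*Q*L := by
        calc (X:ℝ)^2*(y:ℝ)*Real.log y = T*(1/(y:ℝ))*Real.log y := by rw [e1]
          _ ≤ T*Q*Real.log y := by
              apply mul_le_mul_of_nonneg_right _ hly0
              exact mul_le_mul_of_nonneg_left hQ3 hT0
          _ ≤ T*Q*L := by
              apply mul_le_mul_of_nonneg_left hly (by positivity)
      calc 16*(X:ℝ)^2*(y:ℝ)*Real.log y = 16*((X:ℝ)^2*(y:ℝ)*Real.log y) := by ring
        _ ≤ 16*(T*Q*L) := mul_le_mul_of_nonneg_left h1 (by norm_num)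
    have b4 : 4*(X:ℝ)*(y:ℝ)^2 ≤ 4*(T*Q*L) := by
      have h0 : (0:ℝ) ≤ (X:ℝ)*(y:ℝ)^2 := by positivity
      have h1 : (X:ℝ)*(y:ℝ)^2 ≤ T * (1/((K:ℝ)*(y:ℝ)^(n-1))) := by
        calc (X:ℝ)*(y:ℝ)^2 ≤ (X:ℝ)*(y:ℝ)^2 * c0 := le_mul_of_one_le_right h0 hc01
          _ = T * (1/((K:ℝ)*(y:ℝ)^(n-1))) := e4
      have h2 : T * (1/((K:ℝ)*(y:ℝ)^(n-1))) ≤ T*Q := mul_le_mul_of_nonneg_left hQ2 hT0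
      have h3 : T*Q ≤ T*Q*L := le_mul_of_one_le_right (by positivity) hL1
      calc 4*(X:ℝ)*(y:ℝ)^2 = 4*((X:ℝ)*(y:ℝ)^2) := by ring
        _ ≤ 4*(T*Q*L) := mul_le_mul_of_nonneg_left ((h1.trans h2).trans h3) (by norm_num)
    have b5 : 16*(X:ℝ)*(y:ℝ)*(q:ℝ)*Real.log y ≤ 16*(T*Q*L) := by
      have h0 : (0:ℝ) ≤ (X:ℝ)*(y:ℝ)*(q:ℝ) := by positivity
      have h1 : (X:ℝ)*(y:ℝ)*(q:ℝ) ≤ T * ((q:ℝ)/((K:ℝ)*(y:ℝ)^n)) := by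
        calc (X:ℝ)*(y:ℝ)*(q:ℝ) ≤ (X:ℝ)*(y:ℝ)*(q:ℝ) * c0 := le_mul_of_one_le_right h0 hc01
          _ = T * ((q:ℝ)/((K:ℝ)*(y:ℝ)^n)) := e5
      have h2 : (X:ℝ)*(y:ℝ)*(q:ℝ)*Real.log y ≤ T * ((q:ℝ)/((K:ℝ)*(y:ℝ)^n)) * Real.log y :=
        mul_le_mul_of_nonneg_right h1 hly0
      have h3 : T * ((q:ℝ)/((K:ℝ)*(y:ℝ)^n)) * Real.log y ≤ T*Q*Real.log y :=
        mul_le_mul_of_nonneg_right (mul_le_mul_of_nonneg_left hQ4 hT0) hly0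
      have h4 : T*Q*Real.log y ≤ T*Q*L := mul_le_mul_of_nonneg_left hly (by positivity)
      calc 16*(X:ℝ)*(y:ℝ)*(q:ℝ)*Real.log y = 16*((X:ℝ)*(y:ℝ)*(q:ℝ)*Real.log y) := by ring
        _ ≤ 16*(T*Q*L) := mul_le_mul_of_nonneg_left ((h2.trans h3).trans h4) (by norm_num)
    rw [expand]
    calc (X:ℝ)^2*(y:ℝ) + 4*(X:ℝ)^2*(y:ℝ)^2*(1/q) + 16*(X:ℝ)^2*(y:ℝ)*Real.log y
          + 4*(X:ℝ)*(y:ℝ)^2 + 16*(X:ℝ)*(y:ℝ)*q*Real.log y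
        ≤ T*Q*L + 4*(T*Q*L) + 16*(T*Q*L) + 4*(T*Q*L) + 16*(T*Q*L) :=
          add_le_add (add_le_add (add_le_add (add_le_add b1 b2) b3) b4) b5
      _ = 41*T*Q*L := by ring
  -- final combination
  have main1 : (∑ h ∈ Icc 1 X, (tau n h : ℝ) * minInv2 (y:ℝ) (α*h)) ^ 2
      ≤ ((X:ℝ) * (1 + Real.log X)^M) *
          ((y:ℝ) * ((X:ℝ) + ((X:ℝ)/q + 1) * (4*(y:ℝ) + 16*q*Real.log y))) := by
    calc (∑ h ∈ Icc 1 X, (tau n h : ℝ) * minInv2 (y:ℝ) (α*h)) ^ 2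
        ≤ (∑ h ∈ Icc 1 X, ((tau n h:ℝ))^2) * ∑ h ∈ Icc 1 X, (minInv2 (y:ℝ) (α*h))^2 := hCS
      _ ≤ (∑ h ∈ Icc 1 X, ((tau n h:ℝ))^2) *
            ((y:ℝ) * ∑ h ∈ Icc 1 X, minInv2 (y:ℝ) (α*h)) :=
          mul_le_mul_of_nonneg_left hvsq hτ0
      _ ≤ ((X:ℝ) * (1 + Real.log X)^M) *
            ((y:ℝ) * ((X:ℝ) + ((X:ℝ)/q + 1) * (4*(y:ℝ) + 16*q*Real.log y))) := by
          apply mul_le_mul hτ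
          · exact mul_le_mul_of_nonneg_left hv2 hY0.le
          · positivity
          · positivity
  have main2 : ((X:ℝ) * (1 + Real.log X)^M) *
        ((y:ℝ) * ((X:ℝ) + ((X:ℝ)/q + 1) * (4*(y:ℝ) + 16*q*Real.log y)))
      ≤ (c1^M * L^M) * (41 * T * Q * L) := by
    have hpow : (1 + Real.log X)^M ≤ c1^M * L^M := by
      calc (1 + Real.log X)^M ≤ (c1*L)^M := pow_le_pow_left₀ hlogX0 hAc M
        _ = c1^M * L^M := mul_pow _ _ _
    have hrv0 : (0:ℝ) ≤ (y:ℝ) * ((X:ℝ) + ((X:ℝ)/q + 1) * (4*(y:ℝ) + 16*q*Real.log y)) := by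
      positivity
    calc ((X:ℝ) * (1 + Real.log X)^M) *
          ((y:ℝ) * ((X:ℝ) + ((X:ℝ)/q + 1) * (4*(y:ℝ) + 16*q*Real.log y)))
        ≤ ((X:ℝ) * (c1^M * L^M)) *
          ((y:ℝ) * ((X:ℝ) + ((X:ℝ)/q + 1) * (4*(y:ℝ) + 16*q*Real.log y))) := by
          apply mul_le_mul_of_nonneg_right _ hrv0
          exact mul_le_mul_of_nonneg_left hpow (Nat.cast_nonneg X)
      _ = (c1^M * L^M) * ((X:ℝ)*(y:ℝ)*((X:ℝ) + ((X:ℝ)/q + 1)*(4*(y:ℝ) + 16*q*Real.log y))) := by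
          ring
      _ ≤ (c1^M * L^M) * (41 * T * Q * L) := by
          apply mul_le_mul_of_nonneg_left core (by positivity)
  have main3 : (c1^M * L^M) * (41 * T * Q * L)
      = 41 * c0^2 * c1^M * (K:ℝ)^2 * (y:ℝ)^(2*n) * Q * L^(n^2) := by
    rw [hT, ← hMn, ← hr2]
    rw [pow_succ]
    ring
  calc (∑ h ∈ Icc 1 X, (tau n h : ℝ) * minInv2 (y:ℝ) (α*h)) ^ 2
      ≤ ((X:ℝ) * (1 + Real.log X)^M) *
          ((y:ℝ) * ((X:ℝ) + ((X:ℝ)/q + 1) * (4*(y:ℝ) + 16*q*Real.log y))) := main1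
    _ ≤ (c1^M * L^M) * (41 * T * Q * L) := main2
    _ = 41 * c0^2 * c1^M * (K:ℝ)^2 * (y:ℝ)^(2*n) * Q * L^(n^2) := main3
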